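/- At the wild-only equilibrium E_N = (N♯, 0), the Jacobian of the Wolbachia system is upper triangular with diagonal entries −(ρ_N − α_N) and −β_W(N♯ − W♯), both strictly negative under the assumptions ρ_N > α_N, ρ_W > α_W, N♯ > W♯; hence both eigenvalues are negative. -/

import Mathlib

theorem stmt_6 (ρN ρW αN αW βN βW : ℝ)
    (hρN : 0 < ρN) (hρW : 0 < ρW) (hαN : 0 < αN) (hαW : 0 < αW)
    (hβN : 0 < βN) (hβW : 0 < βW)
    (hsN : αN < ρN) (hsW : αW < ρW)
    (Nsharp Wsharp : ℝ)
    (hNs : Nsharp = (ρN - αN) / βN) (hWs : Wsharp = (ρW - αW) / βW)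
    (hgap : Wsharp < Nsharp)
    (J : ℝ → ℝ → Matrix (Fin 2) (Fin 2) ℝ)
    (hJ : ∀ N W : ℝ, J N W =
      !![ρN * (1 - W^2 / (N + W)^2) - αN - βN * (W + 2 * N),
         -N * (βN + ρN * N / (N + W)^2);
         -βW * W,
         ρW - αW - βW * (N + 2 * W)]) :
    J Nsharp 0 1 0 = 0 ∧
    J Nsharp 0 0 0 = -(ρN - αN) ∧
    J Nsharp 0 1 1 = -βW * (Nsharp - Wsharp) ∧
    J Nsharp 0 0 0 < 0 ∧
    J Nsharp 0 1 1 < 0 ∧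
    (∀ μ : ℝ, (J Nsharp 0).charpoly.IsRoot μ → μ < 0) := by
  have h10 : J Nsharp 0 1 0 = 0 := by simp [hJ]
  have h00 : J Nsharp 0 0 0 = -(ρN - αN) := by
    simp only [hJ, Matrix.of_apply, Matrix.cons_val', Matrix.cons_val_zero, Matrix.empty_val',
      Matrix.cons_val_fin_one, Matrix.head_cons, Matrix.head_fin_const]
    have : βN * Nsharp = ρN - αN := by
      rw [hNs]; field_simp
    rw [hNs]
    field_simp
    ring
  have h11 : J Nsharp 0 1 1 = -βW * (Nsharp - Wsharp) := by
    simp only [hJ, Matrix.of_apply, Matrix.cons_val', Matrix.cons_val_zero, Matrix.cons_val_one, Matrix.head_cons,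
      Matrix.empty_val', Matrix.cons_val_fin_one, Matrix.head_fin_const]
    rw [hWs]
    field_simp
    ring
  have hlt00 : J Nsharp 0 0 0 < 0 := by rw [h00]; linarith
  have hlt11 : J Nsharp 0 1 1 < 0 := by
    rw [h11]
    have : 0 < Nsharp - Wsharp := by linarith
    nlinarith
  refine ⟨h10, h00, h11, hlt00, hlt11, ?_⟩
  intro μ hroot
  have hcp : (J Nsharp 0).charpoly =
      (Polynomial.X - Polynomial.C (J Nsharp 0 0 0)) * (Polynomial.X - Polynomial.C (J Nsharp 0 1 1))
        - (- Polynomial.C (J Nsharp 0 0 1)) * (- Polynomial.C (J Nsharp 0 1 0)) := by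
    rw [Matrix.charpoly, Matrix.det_fin_two, Matrix.charmatrix_apply_eq,
      Matrix.charmatrix_apply_eq, Matrix.charmatrix_apply_ne _ _ _ (by decide),
      Matrix.charmatrix_apply_ne _ _ _ (by decide)]
  rw [Polynomial.IsRoot, hcp] at hroot
  simp only [Polynomial.eval_sub, Polynomial.eval_mul, Polynomial.eval_neg,
    Polynomial.eval_X, Polynomial.eval_C, h10] at hroot
  set a := J Nsharp 0 0 0
  set d := J Nsharp 0 1 1
  have hfac : (μ - a) * (μ - d) = 0 := by nlinarith [hroot]
  rcases mul_eq_zero.mp hfac with h | h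
  · have : μ = a := by linarith
    rw [this]; exact hlt00
  · have : μ = d := by linarith
    rw [this]; exact hlt11
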